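/- (Theorem 1, uniqueness) Suppose γ_r > 0 and γ_c > 0. Then F has a unique global minimizer over ℝ^{n×p} if and only if Assumption 1 holds. -/

import Mathlib

open Matrix BigOperators Finset

/-- The graph on `Fin n` with `i ~ j` iff `i ≠ j` and `w i j > 0` (for symmetric `w`). -/
def graphOf {n : ℕ} (w : Fin n → Fin n → ℝ) : SimpleGraph (Fin n) :=
  SimpleGraph.fromRel (fun i j => 0 < w i j)

/-- The 0/1 indicator vector of a subset. -/
noncomputable def chi {n : ℕ} (A : Set (Fin n)) : Fin n → ℝ :=
  A.indicator (fun _ => (1 : ℝ))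

/-- The BMC smoothing penalty
`J(Z) = (γr/2) ∑_{i<j} w i j ‖Z_{i·} - Z_{j·}‖² + (γc/2) ∑_{i<j} w̃ i j ‖Z_{·i} - Z_{·j}‖²`. -/
noncomputable def Jpen {n p : ℕ} (γr γc : ℝ) (w : Fin n → Fin n → ℝ)
    (wt : Fin p → Fin p → ℝ) (Z : Matrix (Fin n) (Fin p) ℝ) : ℝ :=
  γr / 2 * ∑ i, ∑ j ∈ Finset.Ioi i, w i j * ∑ k, (Z i k - Z j k) ^ 2
    + γc / 2 * ∑ i, ∑ j ∈ Finset.Ioi i, wt i j * ∑ k, (Z k i - Z k j) ^ 2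

/-- The BMC objective `F(Z) = (1/2) ∑_{(i,j) ∈ Ω} (X i j - Z i j)² + J(Z)`. -/
noncomputable def objF {n p : ℕ} (Ω : Finset (Fin n × Fin p)) (X : Matrix (Fin n) (Fin p) ℝ)
    (γr γc : ℝ) (w : Fin n → Fin n → ℝ) (wt : Fin p → Fin p → ℝ)
    (Z : Matrix (Fin n) (Fin p) ℝ) : ℝ :=
  (1 / 2) * ∑ q ∈ Ω, (X q.1 q.2 - Z q.1 q.2) ^ 2 + Jpen γr γc w wt Z

/-! ### Auxiliary lemmas -/

/-- linear part of the expansion of `objF` around `Z` in direction `D`. -/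
noncomputable def linB {n p : ℕ} (Ω : Finset (Fin n × Fin p)) (X : Matrix (Fin n) (Fin p) ℝ)
    (γr γc : ℝ) (w : Fin n → Fin n → ℝ) (wt : Fin p → Fin p → ℝ)
    (Z D : Matrix (Fin n) (Fin p) ℝ) : ℝ :=
  ∑ q ∈ Ω, (Z q.1 q.2 - X q.1 q.2) * D q.1 q.2
  + γr * ∑ i, ∑ j ∈ Finset.Ioi i, w i j * ∑ k, (Z i k - Z j k) * (D i k - D j k)
  + γc * ∑ i, ∑ j ∈ Finset.Ioi i, wt i j * ∑ k, (Z k i - Z k j) * (D k i - D k j)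

lemma sum_split {α : Type*} (s : Finset α) (F a b c : α → ℝ) (t : ℝ)
    (h : ∀ x ∈ s, F x = a x + t * (2 * b x) + t ^ 2 * c x) :
    ∑ x ∈ s, F x = ∑ x ∈ s, a x + t * (2 * ∑ x ∈ s, b x) + t ^ 2 * ∑ x ∈ s, c x := by
  rw [Finset.sum_congr rfl h]
  simp only [Finset.sum_add_distrib, ← Finset.mul_sum]

lemma pen_split {m q : ℕ} (w : Fin m → Fin m → ℝ) (Z D : Fin m → Fin q → ℝ) (t : ℝ) :
    ∑ i, ∑ j ∈ Finset.Ioi i, w i j * ∑ k, ((Z i k + t * D i k) - (Z j k + t * D j k)) ^ 2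
    = ∑ i, ∑ j ∈ Finset.Ioi i, w i j * ∑ k, (Z i k - Z j k) ^ 2
      + t * (2 * ∑ i, ∑ j ∈ Finset.Ioi i, w i j * ∑ k, (Z i k - Z j k) * (D i k - D j k))
      + t ^ 2 * ∑ i, ∑ j ∈ Finset.Ioi i, w i j * ∑ k, (D i k - D j k) ^ 2 := by
  refine sum_split _ _ _ _ _ _ (fun i _ => ?_)
  refine sum_split _ _ _ _ _ _ (fun j _ => ?_)
  rw [sum_split (Finset.univ : Finset (Fin q))
      (fun k => ((Z i k + t * D i k) - (Z j k + t * D j k)) ^ 2)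
      (fun k => (Z i k - Z j k) ^ 2) (fun k => (Z i k - Z j k) * (D i k - D j k))
      (fun k => (D i k - D j k) ^ 2) t (fun k _ => by ring)]
  ring

lemma objF_expand {n p : ℕ} (Ω : Finset (Fin n × Fin p)) (X : Matrix (Fin n) (Fin p) ℝ)
    (γr γc : ℝ) (w : Fin n → Fin n → ℝ) (wt : Fin p → Fin p → ℝ)
    (Z D : Matrix (Fin n) (Fin p) ℝ) (t : ℝ) :
    objF Ω X γr γc w wt (Z + t • D)
      = objF Ω X γr γc w wt Z + t * linB Ω X γr γc w wt Z D
        + t ^ 2 * objF Ω 0 γr γc w wt D := by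
  have hΩ : ∑ q ∈ Ω, (X q.1 q.2 - (Z + t • D) q.1 q.2) ^ 2
      = ∑ q ∈ Ω, (X q.1 q.2 - Z q.1 q.2) ^ 2
        + t * (2 * ∑ q ∈ Ω, (Z q.1 q.2 - X q.1 q.2) * D q.1 q.2)
        + t ^ 2 * ∑ q ∈ Ω, ((0 : Matrix (Fin n) (Fin p) ℝ) q.1 q.2 - D q.1 q.2) ^ 2 := by
    refine sum_split _ _ _ _ _ _ (fun x _ => ?_)
    simp only [Matrix.add_apply, Matrix.smul_apply, smul_eq_mul, Matrix.zero_apply]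
    ring
  have hrow : ∑ i, ∑ j ∈ Finset.Ioi i, w i j * ∑ k, ((Z + t • D) i k - (Z + t • D) j k) ^ 2
      = ∑ i, ∑ j ∈ Finset.Ioi i, w i j * ∑ k, (Z i k - Z j k) ^ 2
        + t * (2 * ∑ i, ∑ j ∈ Finset.Ioi i, w i j * ∑ k, (Z i k - Z j k) * (D i k - D j k))
        + t ^ 2 * ∑ i, ∑ j ∈ Finset.Ioi i, w i j * ∑ k, (D i k - D j k) ^ 2 := by
    have := pen_split w (fun i k => Z i k) (fun i k => D i k) t
    simpa only [Matrix.add_apply, Matrix.smul_apply, smul_eq_mul] using this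
  have hcol : ∑ i, ∑ j ∈ Finset.Ioi i, wt i j * ∑ k, ((Z + t • D) k i - (Z + t • D) k j) ^ 2
      = ∑ i, ∑ j ∈ Finset.Ioi i, wt i j * ∑ k, (Z k i - Z k j) ^ 2
        + t * (2 * ∑ i, ∑ j ∈ Finset.Ioi i, wt i j * ∑ k, (Z k i - Z k j) * (D k i - D k j))
        + t ^ 2 * ∑ i, ∑ j ∈ Finset.Ioi i, wt i j * ∑ k, (D k i - D k j) ^ 2 := by
    have := pen_split wt (fun i k => Z k i) (fun i k => D k i) t
    simpa only [Matrix.add_apply, Matrix.smul_apply, smul_eq_mul] using this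
  simp only [objF, Jpen, linB]
  rw [hΩ, hrow, hcol]
  simp only [Matrix.zero_apply, zero_sub, neg_sq]
  ring

/-- if the penalty sum vanishes, rows are constant on connected components. -/
lemma pen_local_const {m q : ℕ} (w : Fin m → Fin m → ℝ) (hsymm : ∀ i j, w i j = w j i)
    (hnn : ∀ i j, 0 ≤ w i j) (E : Fin m → Fin q → ℝ)
    (h : ∑ i, ∑ j ∈ Finset.Ioi i, w i j * ∑ k, (E i k - E j k) ^ 2 = 0) :
    ∀ i j, (graphOf w).Reachable i j → ∀ k, E i k = E j k := by
  have t0 : ∀ i j : Fin m, i < j → w i j * ∑ k, (E i k - E j k) ^ 2 = 0 := by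
    intro i j hij
    have h1 := (Finset.sum_eq_zero_iff_of_nonneg (fun i _ =>
      Finset.sum_nonneg fun j _ => mul_nonneg (hnn _ _)
        (Finset.sum_nonneg fun k _ => sq_nonneg _))).mp h i (Finset.mem_univ i)
    exact (Finset.sum_eq_zero_iff_of_nonneg (fun j _ => mul_nonneg (hnn _ _)
      (Finset.sum_nonneg fun k _ => sq_nonneg _))).mp h1 j (Finset.mem_Ioi.mpr hij)
  have step : ∀ i j : Fin m, 0 < w i j → ∀ k, E i k = E j k := by
    have key : ∀ i j : Fin m, i < j → 0 < w i j → ∀ k, E i k = E j k := by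
      intro i j hij hw k
      have h2 : ∑ k, (E i k - E j k) ^ 2 = 0 := by
        rcases mul_eq_zero.mp (t0 i j hij) with h' | h'
        · exact absurd h' (ne_of_gt hw)
        · exact h'
      have := (Finset.sum_eq_zero_iff_of_nonneg (fun k _ => sq_nonneg _)).mp h2 k
        (Finset.mem_univ k)
      have := (pow_eq_zero_iff two_ne_zero).mp this
      linarith [sub_eq_zero.mp this]
    intro i j hw k
    rcases lt_trichotomy i j with hij | hij | hij
    · exact key i j hij hw k
    · rw [hij]
    · exact (key j i hij (by rwa [← hsymm]) k).symm
  intro i j hr k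
  obtain ⟨walk⟩ := hr
  induction walk with
  | nil => rfl
  | @cons u v x hadj p ih =>
    rw [graphOf, SimpleGraph.fromRel_adj] at hadj
    have hw : 0 < w u v := by
      rcases hadj.2 with h' | h'
      · exact h'
      · rwa [hsymm]
    exact (step u v hw k).trans ih

lemma pen_nonneg {m q : ℕ} (w : Fin m → Fin m → ℝ) (hnn : ∀ i j, 0 ≤ w i j)
    (E : Fin m → Fin q → ℝ) :
    0 ≤ ∑ i, ∑ j ∈ Finset.Ioi i, w i j * ∑ k, (E i k - E j k) ^ 2 :=
  Finset.sum_nonneg fun i _ => Finset.sum_nonneg fun j _ =>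
    mul_nonneg (hnn _ _) (Finset.sum_nonneg fun k _ => sq_nonneg _)

lemma objF0_nonneg {n p : ℕ} (Ω : Finset (Fin n × Fin p)) (γr γc : ℝ)
    (hγr : 0 ≤ γr) (hγc : 0 ≤ γc)
    (w : Fin n → Fin n → ℝ) (wt : Fin p → Fin p → ℝ)
    (hnn : ∀ i j, 0 ≤ w i j) (hnn' : ∀ i j, 0 ≤ wt i j)
    (D : Matrix (Fin n) (Fin p) ℝ) :
    0 ≤ objF Ω 0 γr γc w wt D := by
  unfold objF Jpen
  have h1 : (0:ℝ) ≤ ∑ q ∈ Ω, ((0 : Matrix (Fin n) (Fin p) ℝ) q.1 q.2 - D q.1 q.2) ^ 2 :=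
    Finset.sum_nonneg fun q _ => sq_nonneg _
  have h2 := pen_nonneg w hnn (fun i k => D i k)
  have h3 := pen_nonneg wt hnn' (fun i k => D k i)
  positivity

lemma objF_continuous {n p : ℕ} (Ω : Finset (Fin n × Fin p)) (X : Matrix (Fin n) (Fin p) ℝ)
    (γr γc : ℝ) (w : Fin n → Fin n → ℝ) (wt : Fin p → Fin p → ℝ) :
    Continuous (fun Z : Fin n → Fin p → ℝ => objF Ω X γr γc w wt Z) := by
  have hentry : ∀ (i : Fin n) (j : Fin p), Continuous fun Z : Fin n → Fin p → ℝ => Z i j :=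
    fun i j => (continuous_apply j).comp (continuous_apply i)
  unfold objF Jpen
  refine Continuous.add ?_ (Continuous.add ?_ ?_)
  · exact continuous_const.mul (continuous_finset_sum _ fun q _ =>
      (continuous_const.sub (hentry q.1 q.2)).pow 2)
  · exact continuous_const.mul (continuous_finset_sum _ fun i _ =>
      continuous_finset_sum _ fun j _ => continuous_const.mul
        (continuous_finset_sum _ fun k _ => ((hentry i k).sub (hentry j k)).pow 2))
  · exact continuous_const.mul (continuous_finset_sum _ fun i _ =>
      continuous_finset_sum _ fun j _ => continuous_const.mul
        (continuous_finset_sum _ fun k _ => ((hentry k i).sub (hentry k j)).pow 2))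

lemma objF0_zero {n p : ℕ} (Ω : Finset (Fin n × Fin p)) (γr γc : ℝ)
    (w : Fin n → Fin n → ℝ) (wt : Fin p → Fin p → ℝ) :
    objF Ω 0 γr γc w wt 0 = 0 := by
  simp [objF, Jpen]

/-- Theorem 1, uniqueness: for `γr, γc > 0`, the BMC objective `F` has a
unique global minimizer iff Assumption 1 holds (every bicluster `A_r × B_c` contains an
observed entry). -/
theorem bmc_unique_minimizer_iff {n p R C : ℕ} (Ω : Finset (Fin n × Fin p))
    (X : Matrix (Fin n) (Fin p) ℝ) (γr γc : ℝ) (hγr : 0 < γr) (hγc : 0 < γc)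
    (w : Fin n → Fin n → ℝ) (wt : Fin p → Fin p → ℝ)
    (hsymm : ∀ i j, w i j = w j i) (hnonneg : ∀ i j, 0 ≤ w i j)
    (hdiag : ∀ i, w i i = 0)
    (hsymm' : ∀ i j, wt i j = wt j i) (hnonneg' : ∀ i j, 0 ≤ wt i j)
    (hdiag' : ∀ i, wt i i = 0)
    (A : Fin R → Set (Fin n))
    (eA : (graphOf w).ConnectedComponent ≃ Fin R)
    (hA : ∀ r, A r = {v | eA ((graphOf w).connectedComponentMk v) = r})
    (B : Fin C → Set (Fin p))
    (eB : (graphOf wt).ConnectedComponent ≃ Fin C)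
    (hB : ∀ c, B c = {v | eB ((graphOf wt).connectedComponentMk v) = c}) :
    (∃! Z : Matrix (Fin n) (Fin p) ℝ,
        ∀ Z' : Matrix (Fin n) (Fin p) ℝ, objF Ω X γr γc w wt Z ≤ objF Ω X γr γc w wt Z')
      ↔ (∀ r c, ∃ q ∈ Ω, q.1 ∈ A r ∧ q.2 ∈ B c) := by
  have memA : ∀ (r) (v : Fin n), v ∈ A r ↔ eA ((graphOf w).connectedComponentMk v) = r := by
    intro r v; rw [hA r]; exact Iff.rfl
  have memB : ∀ (c) (v : Fin p), v ∈ B c ↔ eB ((graphOf wt).connectedComponentMk v) = c := by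
    intro c v; rw [hB c]; exact Iff.rfl
  -- null-space lemma under Assumption 1
  have hnull : (∀ r c, ∃ q ∈ Ω, q.1 ∈ A r ∧ q.2 ∈ B c) →
      ∀ D : Matrix (Fin n) (Fin p) ℝ, objF Ω 0 γr γc w wt D = 0 → D = 0 := by
    intro hass D hQ
    have hS1 : (0:ℝ) ≤ ∑ q ∈ Ω, ((0 : Matrix (Fin n) (Fin p) ℝ) q.1 q.2 - D q.1 q.2) ^ 2 :=
      Finset.sum_nonneg fun q _ => sq_nonneg _
    have hS2 := pen_nonneg w hnonneg (fun i k => D i k)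
    have hS3 := pen_nonneg wt hnonneg' (fun i k => D k i)
    unfold objF Jpen at hQ
    have e2 : (0:ℝ) ≤ γr / 2 * ∑ i, ∑ j ∈ Finset.Ioi i, w i j * ∑ k, (D i k - D j k) ^ 2 :=
      mul_nonneg (by linarith) hS2
    have e3 : (0:ℝ) ≤ γc / 2 * ∑ i, ∑ j ∈ Finset.Ioi i, wt i j * ∑ k, (D k i - D k j) ^ 2 :=
      mul_nonneg (by linarith) hS3
    have e1 : (0:ℝ) ≤ (1/2) * ∑ q ∈ Ω, ((0 : Matrix (Fin n) (Fin p) ℝ) q.1 q.2 - D q.1 q.2) ^ 2 := by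
      linarith
    have hrow0 : ∑ i, ∑ j ∈ Finset.Ioi i, w i j * ∑ k, (D i k - D j k) ^ 2 = 0 := by
      have : γr / 2 * ∑ i, ∑ j ∈ Finset.Ioi i, w i j * ∑ k, (D i k - D j k) ^ 2 = 0 := by
        linarith
      rcases mul_eq_zero.mp this with h' | h'
      · exact absurd h' (by positivity)
      · exact h'
    have hcol0 : ∑ i, ∑ j ∈ Finset.Ioi i, wt i j * ∑ k, (D k i - D k j) ^ 2 = 0 := by
      have : γc / 2 * ∑ i, ∑ j ∈ Finset.Ioi i, wt i j * ∑ k, (D k i - D k j) ^ 2 = 0 := by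
        linarith
      rcases mul_eq_zero.mp this with h' | h'
      · exact absurd h' (by positivity)
      · exact h'
    have hΩ0 : ∀ q ∈ Ω, D q.1 q.2 = 0 := by
      have hsum : ∑ q ∈ Ω, ((0 : Matrix (Fin n) (Fin p) ℝ) q.1 q.2 - D q.1 q.2) ^ 2 = 0 := by
        linarith
      intro q hq
      have := (Finset.sum_eq_zero_iff_of_nonneg (fun q _ => sq_nonneg _)).mp hsum q hq
      have := (pow_eq_zero_iff two_ne_zero).mp this
      simpa using (sub_eq_zero.mp this).symm
    have hrows := pen_local_const w hsymm hnonneg (fun i k => D i k) hrow0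
    have hcols := pen_local_const wt hsymm' hnonneg' (fun i k => D k i) hcol0
    funext i j
    obtain ⟨q, hq, hq1, hq2⟩ := hass (eA ((graphOf w).connectedComponentMk i))
      (eB ((graphOf wt).connectedComponentMk j))
    have hri : (graphOf w).Reachable q.1 i := by
      rw [memA] at hq1
      exact SimpleGraph.ConnectedComponent.eq.mp (eA.injective (by rw [hq1]))
    have hcj : (graphOf wt).Reachable q.2 j := by
      rw [memB] at hq2
      exact SimpleGraph.ConnectedComponent.eq.mp (eB.injective (by rw [hq2]))
    have h1 : D i j = D q.1 j := (hrows q.1 i hri j).symm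
    have h2 : D q.1 j = D q.1 q.2 := (hcols q.2 j hcj q.1).symm
    show D i j = 0
    rw [h1, h2, hΩ0 q hq]
  constructor
  · -- uniqueness implies Assumption 1
    rintro ⟨Z, hmin, huniq⟩ r c
    by_contra hno
    push_neg at hno
    set D : Matrix (Fin n) (Fin p) ℝ := Matrix.of (fun i j => chi (A r) i * chi (B c) j) with hD
    have chiA_const : ∀ i i', 0 < w i i' → chi (A r) i = chi (A r) i' := by
      intro i i' hw
      have hadj : (graphOf w).Adj i i' := by
        rw [graphOf, SimpleGraph.fromRel_adj]
        refine ⟨?_, Or.inl hw⟩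
        rintro rfl
        rw [hdiag] at hw
        exact lt_irrefl 0 hw
      have hcc := SimpleGraph.ConnectedComponent.sound hadj.reachable
      have hiff : i ∈ A r ↔ i' ∈ A r := by rw [memA, memA, hcc]
      by_cases hm : i ∈ A r
      · rw [chi, Set.indicator_of_mem hm, Set.indicator_of_mem (hiff.mp hm)]
      · rw [chi, Set.indicator_of_notMem hm,
          Set.indicator_of_notMem (fun h => hm (hiff.mpr h))]
    have chiB_const : ∀ j j', 0 < wt j j' → chi (B c) j = chi (B c) j' := by
      intro j j' hw
      have hadj : (graphOf wt).Adj j j' := by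
        rw [graphOf, SimpleGraph.fromRel_adj]
        refine ⟨?_, Or.inl hw⟩
        rintro rfl
        rw [hdiag'] at hw
        exact lt_irrefl 0 hw
      have hcc := SimpleGraph.ConnectedComponent.sound hadj.reachable
      have hiff : j ∈ B c ↔ j' ∈ B c := by rw [memB, memB, hcc]
      by_cases hm : j ∈ B c
      · rw [chi, Set.indicator_of_mem hm, Set.indicator_of_mem (hiff.mp hm)]
      · rw [chi, Set.indicator_of_notMem hm,
          Set.indicator_of_notMem (fun h => hm (hiff.mpr h))]
    have hDΩ : ∀ q ∈ Ω, D q.1 q.2 = 0 := by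
      intro q hq
      by_cases h1 : q.1 ∈ A r
      · have h2 := hno q hq h1
        simp [hD, Matrix.of_apply, chi, Set.indicator_of_notMem h2]
      · simp [hD, Matrix.of_apply, chi, Set.indicator_of_notMem h1]
    have hDrow : ∀ (i i' : Fin n), 0 < w i i' → ∀ k, D i k = D i' k := by
      intro i i' hw k
      simp only [hD, Matrix.of_apply]
      rw [chiA_const i i' hw]
    have hDcol : ∀ (j j' : Fin p), 0 < wt j j' → ∀ k, D k j = D k j' := by
      intro j j' hw k
      simp only [hD, Matrix.of_apply]
      rw [chiB_const j j' hw]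
    have hrowz : ∀ (Z' : Matrix (Fin n) (Fin p) ℝ) (i i' : Fin n),
        w i i' * ∑ k, (Z' i k - Z' i' k) * (D i k - D i' k) = 0 := by
      intro Z' i i'
      rcases (hnonneg i i').eq_or_lt with h' | h'
      · rw [← h', zero_mul]
      · have : ∀ k, (Z' i k - Z' i' k) * (D i k - D i' k) = 0 := fun k => by
          rw [hDrow i i' h' k, sub_self, mul_zero]
        rw [Finset.sum_congr rfl (fun k _ => this k), Finset.sum_const_zero, mul_zero]
    have hcolz : ∀ (Z' : Matrix (Fin n) (Fin p) ℝ) (j j' : Fin p),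
        wt j j' * ∑ k, (Z' k j - Z' k j') * (D k j - D k j') = 0 := by
      intro Z' j j'
      rcases (hnonneg' j j').eq_or_lt with h' | h'
      · rw [← h', zero_mul]
      · have : ∀ k, (Z' k j - Z' k j') * (D k j - D k j') = 0 := fun k => by
          rw [hDcol j j' h' k, sub_self, mul_zero]
        rw [Finset.sum_congr rfl (fun k _ => this k), Finset.sum_const_zero, mul_zero]
    have hrowzsq : ∀ (i i' : Fin n), w i i' * ∑ k, (D i k - D i' k) ^ 2 = 0 := by
      intro i i'
      rcases (hnonneg i i').eq_or_lt with h' | h'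
      · rw [← h', zero_mul]
      · have : ∀ k, (D i k - D i' k) ^ 2 = 0 := fun k => by
          rw [hDrow i i' h' k, sub_self]; ring
        rw [Finset.sum_congr rfl (fun k _ => this k), Finset.sum_const_zero, mul_zero]
    have hcolzsq : ∀ (j j' : Fin p), wt j j' * ∑ k, (D k j - D k j') ^ 2 = 0 := by
      intro j j'
      rcases (hnonneg' j j').eq_or_lt with h' | h'
      · rw [← h', zero_mul]
      · have : ∀ k, (D k j - D k j') ^ 2 = 0 := fun k => by
          rw [hDcol j j' h' k, sub_self]; ring
        rw [Finset.sum_congr rfl (fun k _ => this k), Finset.sum_const_zero, mul_zero]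
    have hQD : objF Ω 0 γr γc w wt D = 0 := by
      unfold objF Jpen
      rw [Finset.sum_eq_zero (fun q hq => by
        rw [hDΩ q hq]; simp [Matrix.zero_apply])]
      rw [Finset.sum_eq_zero (fun i _ => Finset.sum_eq_zero (fun j _ => hrowzsq i j))]
      rw [Finset.sum_eq_zero (fun i _ => Finset.sum_eq_zero (fun j _ => hcolzsq i j))]
      ring
    have hlin : ∀ Z', linB Ω X γr γc w wt Z' D = 0 := by
      intro Z'
      unfold linB
      rw [Finset.sum_eq_zero (fun q hq => by rw [hDΩ q hq, mul_zero])]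
      rw [Finset.sum_eq_zero (fun i _ => Finset.sum_eq_zero (fun j _ => hrowz Z' i j))]
      rw [Finset.sum_eq_zero (fun i _ => Finset.sum_eq_zero (fun j _ => hcolz Z' i j))]
      ring
    have key : objF Ω X γr γc w wt (Z + D) = objF Ω X γr γc w wt Z := by
      have h := objF_expand Ω X γr γc w wt Z D 1
      rw [one_smul] at h
      rw [h, hlin Z, hQD]; ring
    have hmin' : ∀ Z', objF Ω X γr γc w wt (Z + D) ≤ objF Ω X γr γc w wt Z' := by
      intro Z'; rw [key]; exact hmin Z'
    have heq := huniq (Z + D) hmin'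
    have hD0 : D = 0 := by
      have := add_eq_left.mp heq
      exact this
    obtain ⟨v, hv⟩ := Quot.exists_rep (eA.symm r)
    obtain ⟨u, hu⟩ := Quot.exists_rep (eB.symm c)
    have hvA : v ∈ A r := by
      rw [memA]
      rw [show (graphOf w).connectedComponentMk v = eA.symm r from hv, Equiv.apply_symm_apply]
    have huB : u ∈ B c := by
      rw [memB]
      rw [show (graphOf wt).connectedComponentMk u = eB.symm c from hu, Equiv.apply_symm_apply]
    have hone : D v u = 1 := by
      simp [hD, Matrix.of_apply, chi, Set.indicator_of_mem hvA, Set.indicator_of_mem huB]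
    rw [hD0] at hone
    simp at hone
  · -- Assumption 1 implies unique minimizer
    intro hass
    by_cases hnp : n = 0 ∨ p = 0
    · haveI hsub : Subsingleton (Matrix (Fin n) (Fin p) ℝ) := by
        rcases hnp with h | h
        · subst h; exact ⟨fun a b => funext fun i => i.elim0⟩
        · subst h; exact ⟨fun a b => funext fun i => funext fun j => j.elim0⟩
      exact ⟨0, fun Z' => le_of_eq (congrArg _ (Subsingleton.elim _ _)),
        fun y _ => Subsingleton.elim y 0⟩
    push_neg at hnp
    have hn' : 0 < n := Nat.pos_of_ne_zero hnp.1
    have hp' : 0 < p := Nat.pos_of_ne_zero hnp.2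
    have hQnonneg : ∀ D : Matrix (Fin n) (Fin p) ℝ, 0 ≤ objF Ω 0 γr γc w wt D :=
      objF0_nonneg Ω γr γc (le_of_lt hγr) (le_of_lt hγc) w wt hnonneg hnonneg'
    have hnull' := hnull hass
    haveI : Nontrivial (Fin n → Fin p → ℝ) := by
      refine ⟨⟨0, fun _ _ => 1, ?_⟩⟩
      intro h
      have := congrFun (congrFun h ⟨0, hn'⟩) ⟨0, hp'⟩
      norm_num at this
    obtain ⟨D₀, hD₀mem, hD₀min⟩ := (isCompact_sphere (0 : Fin n → Fin p → ℝ) 1).exists_isMinOn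
      (NormedSpace.sphere_nonempty.mpr zero_le_one)
      ((objF_continuous Ω 0 γr γc w wt).continuousOn)
    have hD₀norm : ‖D₀‖ = 1 := by rwa [mem_sphere_zero_iff_norm] at hD₀mem
    set lam := objF Ω 0 γr γc w wt D₀ with hlamdef
    have hlam : 0 < lam := by
      rcases (hQnonneg D₀).eq_or_lt with h | h
      · exfalso
        have hz : D₀ = 0 := hnull' D₀ h.symm
        rw [hz] at hD₀norm
        simp at hD₀norm
      · exact h
    have hhom : ∀ (a : ℝ) (D : Matrix (Fin n) (Fin p) ℝ),
        objF Ω 0 γr γc w wt (a • D) = a ^ 2 * objF Ω 0 γr γc w wt D := by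
      intro a D
      have h := objF_expand Ω 0 γr γc w wt 0 D a
      rw [zero_add] at h
      have hlin0 : linB Ω 0 γr γc w wt 0 D = 0 := by
        simp [linB, Matrix.zero_apply]
      rw [h, hlin0, objF0_zero]
      ring
    have hlower : ∀ Z : Fin n → Fin p → ℝ, lam * ‖Z‖ ^ 2 ≤ objF Ω 0 γr γc w wt Z := by
      intro Z
      by_cases hZ : Z = (0 : Fin n → Fin p → ℝ)
      · rw [hZ]
        rw [show objF Ω 0 γr γc w wt (0 : Fin n → Fin p → ℝ) = 0 from objF0_zero Ω γr γc w wt]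
        simp
      · have hnz : ‖Z‖ ≠ 0 := norm_ne_zero_iff.mpr hZ
        have hu : ‖Z‖⁻¹ • Z ∈ Metric.sphere (0 : Fin n → Fin p → ℝ) 1 := by
          rw [mem_sphere_zero_iff_norm, norm_smul]
          simp [norm_inv, norm_norm, inv_mul_cancel₀ hnz]
        have hmin1 : lam ≤ objF Ω 0 γr γc w wt (‖Z‖⁻¹ • Z) := hD₀min hu
        have hZeq : ‖Z‖ • (‖Z‖⁻¹ • Z) = Z := smul_inv_smul₀ hnz Z
        have := hhom ‖Z‖ (‖Z‖⁻¹ • Z)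
        replace this : objF Ω 0 γr γc w wt Z = ‖Z‖ ^ 2 * objF Ω 0 γr γc w wt (‖Z‖⁻¹ • Z) :=
          (congrArg (objF Ω 0 γr γc w wt) hZeq).symm.trans this
        rw [this]
        have h2 : (0:ℝ) ≤ ‖Z‖ ^ 2 := sq_nonneg _
        nlinarith
    set CB := ∑ q ∈ Ω, |X q.1 q.2| with hCBdef
    have hCBnn : 0 ≤ CB := Finset.sum_nonneg fun q _ => abs_nonneg _
    have hcomp : ∀ Z : Fin n → Fin p → ℝ,
        objF Ω 0 γr γc w wt Z - CB * ‖Z‖ ≤ objF Ω X γr γc w wt Z := by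
      intro Z
      have e : ∑ q ∈ Ω, (X q.1 q.2 - Z q.1 q.2) ^ 2
          = ∑ q ∈ Ω, ((0 : Matrix (Fin n) (Fin p) ℝ) q.1 q.2 - Z q.1 q.2) ^ 2
            + (∑ q ∈ Ω, X q.1 q.2 ^ 2 - 2 * ∑ q ∈ Ω, X q.1 q.2 * Z q.1 q.2) := by
        rw [Finset.mul_sum, ← Finset.sum_sub_distrib, ← Finset.sum_add_distrib]
        refine Finset.sum_congr rfl fun q _ => ?_
        simp only [Matrix.zero_apply]
        ring
      have hXZ : ∑ q ∈ Ω, X q.1 q.2 * Z q.1 q.2 ≤ CB * ‖Z‖ := by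
        rw [hCBdef, Finset.sum_mul]
        refine Finset.sum_le_sum fun q _ => ?_
        have h1 : ‖Z q.1‖ ≤ ‖Z‖ := norm_le_pi_norm Z q.1
        have h2 : |Z q.1 q.2| ≤ ‖Z q.1‖ := by
          have := norm_le_pi_norm (Z q.1) q.2
          rwa [Real.norm_eq_abs] at this
        calc X q.1 q.2 * Z q.1 q.2 ≤ |X q.1 q.2 * Z q.1 q.2| := le_abs_self _
          _ = |X q.1 q.2| * |Z q.1 q.2| := abs_mul _ _
          _ ≤ |X q.1 q.2| * ‖Z‖ := by
              exact mul_le_mul_of_nonneg_left (le_trans h2 h1) (abs_nonneg _)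
      have hX2 : (0:ℝ) ≤ ∑ q ∈ Ω, X q.1 q.2 ^ 2 := Finset.sum_nonneg fun q _ => sq_nonneg _
      unfold objF
      rw [e]
      linarith
    have hf0 : (0:ℝ) ≤ |objF Ω X γr γc w wt (0 : Fin n → Fin p → ℝ)| := abs_nonneg _
    set ρ := max 1 ((CB + |objF Ω X γr γc w wt (0 : Fin n → Fin p → ℝ)| + 1) / lam) with hρdef
    have hρ1 : (1:ℝ) ≤ ρ := le_max_left _ _
    have hball : ∀ Z : Fin n → Fin p → ℝ, ρ < ‖Z‖ →
        objF Ω X γr γc w wt (0 : Fin n → Fin p → ℝ) < objF Ω X γr γc w wt Z := by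
      intro Z hZ
      have h1 : 1 ≤ ‖Z‖ := le_trans hρ1 hZ.le
      have h2 : (CB + |objF Ω X γr γc w wt (0 : Fin n → Fin p → ℝ)| + 1) / lam ≤ ‖Z‖ :=
        le_trans (le_max_right _ _) hZ.le
      have h3 : CB + |objF Ω X γr γc w wt (0 : Fin n → Fin p → ℝ)| + 1 ≤ lam * ‖Z‖ := by
        rw [div_le_iff₀ hlam] at h2
        linarith
      have h4 := hlower Z
      have h5 := hcomp Z
      have h6 : objF Ω X γr γc w wt (0 : Fin n → Fin p → ℝ)
          ≤ |objF Ω X γr γc w wt (0 : Fin n → Fin p → ℝ)| := le_abs_self _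
      nlinarith [mul_nonneg (sub_nonneg.mpr h1)
        (by linarith : (0:ℝ) ≤ lam * ‖Z‖ - CB)]
    obtain ⟨Zs, hZsmem, hZsmin⟩ := (isCompact_closedBall (0 : Fin n → Fin p → ℝ) ρ).exists_isMinOn
      ⟨0, Metric.mem_closedBall_self (by linarith)⟩
      ((objF_continuous Ω X γr γc w wt).continuousOn)
    have hglobal : ∀ Z' : Matrix (Fin n) (Fin p) ℝ,
        objF Ω X γr γc w wt Zs ≤ objF Ω X γr γc w wt Z' := by
      intro Z'
      by_cases hmem : (show Fin n → Fin p → ℝ from Z') ∈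
          Metric.closedBall (0 : Fin n → Fin p → ℝ) ρ
      · exact hZsmin hmem
      · have hgt : ρ < ‖(show Fin n → Fin p → ℝ from Z')‖ := by
          rw [Metric.mem_closedBall, dist_zero_right] at hmem
          exact not_le.mp hmem
        have hb := hball _ hgt
        have h0 : objF Ω X γr γc w wt Zs
            ≤ objF Ω X γr γc w wt (0 : Fin n → Fin p → ℝ) :=
          hZsmin (Metric.mem_closedBall_self (by linarith))
        linarith
    refine ⟨Zs, hglobal, ?_⟩
    intro Z' hZ'
    have heq : objF Ω X γr γc w wt Z' = objF Ω X γr γc w wt Zs :=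
      le_antisymm (hZ' Zs) (hglobal Z')
    set D := Z' - (show Matrix (Fin n) (Fin p) ℝ from Zs) with hDdef
    have h1 := objF_expand Ω X γr γc w wt Zs D 1
    rw [one_smul] at h1
    have hZsD : (show Matrix (Fin n) (Fin p) ℝ from Zs) + D = Z' := by rw [hDdef]; abel
    rw [hZsD] at h1
    have hQeq : linB Ω X γr γc w wt Zs D + objF Ω 0 γr γc w wt D = 0 := by
      rw [heq] at h1
      nlinarith [h1]
    have h2 := objF_expand Ω X γr γc w wt Zs D (1/2)
    have h3 : objF Ω X γr γc w wt Zs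
        ≤ objF Ω X γr γc w wt ((show Matrix (Fin n) (Fin p) ℝ from Zs) + (1/2 : ℝ) • D) :=
      hglobal _
    rw [h2] at h3
    have hQ0 : objF Ω 0 γr γc w wt D = 0 := by
      have hle : objF Ω 0 γr γc w wt D ≤ 0 := by nlinarith [h3, hQeq]
      exact le_antisymm hle (hQnonneg D)
    have hD0 : D = 0 := hnull' D hQ0
    rw [hDdef] at hD0
    have := sub_eq_zero.mp hD0
    exact this
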